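/- The algorithm that outputs max(m, S/p) + m, where S is the total weight and m the maximum element of the sequence, is a 2-approximation for the optimal bottleneck value: B* ≤ max(m, S/p) + m ≤ 2·B*. -/

import Mathlib

/-- Greedy cut: split off a minimal prefix with sum exceeding `t` (or the whole list). -/
noncomputable def cutG : ℝ → List ℕ → List ℕ × List ℕ
  | _, [] => ([], [])
  | t, x :: xs =>
    if (x : ℝ) ≤ t then
      (x :: (cutG (t - x) xs).1, (cutG (t - x) xs).2)
    else ([x], xs)
termination_by t L => L.length

lemma cutG_append : ∀ (t : ℝ) (L : List ℕ), (cutG t L).1 ++ (cutG t L).2 = L := by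
  intro t L
  induction L generalizing t with
  | nil => simp [cutG]
  | cons x xs ih =>
    simp only [cutG]
    split
    · simp [ih]
    · simp

lemma cutG_fst_sum {c : ℝ} (hc : 0 ≤ c) :
    ∀ (t : ℝ), 0 ≤ t → ∀ (L : List ℕ), (∀ x ∈ L, (x : ℝ) ≤ c) →
      (((cutG t L).1.sum : ℝ)) ≤ t + c := by
  intro t ht L
  induction L generalizing t with
  | nil => intro _; simpa [cutG] using add_nonneg ht hc
  | cons x xs ih =>
    intro hL
    simp only [cutG]
    split
    · rename_i hx
      have h1 := ih (t - x) (by linarith) (fun y hy => hL y (List.mem_cons_of_mem _ hy))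
      push_cast [List.map_cons, List.sum_cons]
      push_cast at h1
      linarith
    · have := hL x List.mem_cons_self
      push_cast [List.map_cons, List.sum_cons, List.map_nil, List.sum_nil]
      linarith

lemma cutG_snd_empty_or : ∀ (t : ℝ) (L : List ℕ),
    (cutG t L).2 = [] ∨ t < ((cutG t L).1.sum : ℝ) := by
  intro t L
  induction L generalizing t with
  | nil => left; simp [cutG]
  | cons x xs ih =>
    simp only [cutG]
    split
    · rename_i hx
      rcases ih (t - x) with h | h
      · left; exact h
      · right; push_cast [List.map_cons, List.sum_cons]; push_cast at h; linarith
    · rename_i hx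
      right
      push_cast [List.map_cons, List.sum_cons, List.map_nil, List.sum_nil] at hx ⊢
      linarith

/-- Key: a list with elements bounded by `c` and sum at most `(p+1)·t` can be split
into `p+1` contiguous blocks each of sum at most `t + c`. -/
lemma keySplit (c : ℝ) (hc : 0 ≤ c) :
    ∀ (p : ℕ) (t : ℝ) (L : List ℕ), (∀ x ∈ L, (x : ℝ) ≤ c) →
      ((L.sum : ℝ)) ≤ (p + 1) * t →
      ∃ parts : List (List ℕ), parts.length = p + 1 ∧ parts.flatten = L ∧
        ∀ q ∈ parts, ((q.sum : ℝ)) ≤ t + c := by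
  intro p
  induction p with
  | zero =>
    intro t L hL hs
    refine ⟨[L], rfl, by simp, ?_⟩
    intro q hq
    simp only [List.mem_singleton] at hq
    subst hq
    push_cast at hs ⊢
    linarith
  | succ p ih =>
    intro t L hL hs
    have ht : 0 ≤ t := by
      by_contra h
      push_neg at h
      have h1 : (0 : ℝ) ≤ (L.sum : ℝ) := by positivity
      nlinarith
    set a := (cutG t L).1 with ha
    set b := (cutG t L).2 with hb
    have hab : a ++ b = L := cutG_append t L
    have hLa : ∀ x ∈ a, (x : ℝ) ≤ c := fun x hx => hL x (hab ▸ List.mem_append_left _ hx)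
    have hLb : ∀ x ∈ b, (x : ℝ) ≤ c := fun x hx => hL x (hab ▸ List.mem_append_right _ hx)
    have hsum : ((a.sum : ℝ)) + ((b.sum : ℝ)) = ((L.sum : ℝ)) := by
      rw [← hab]; push_cast [List.sum_append]; ring
    have hbsum : ((b.sum : ℝ)) ≤ (p + 1) * t := by
      rcases cutG_snd_empty_or t L with h | h
      · rw [← hb] at h
        rw [h]
        simp only [List.sum_nil, Nat.cast_zero]
        positivity
      · rw [← ha] at h
        have : ((L.sum : ℝ)) ≤ (p + 1 + 1) * t := by push_cast at hs ⊢; linarith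
        nlinarith
    obtain ⟨parts, hlen, hflat, hbound⟩ := ih t b hLb hbsum
    refine ⟨a :: parts, by simp [hlen], by simp [hflat, hab], ?_⟩
    intro q hq
    rcases List.mem_cons.mp hq with rfl | hq
    · exact cutG_fst_sum hc t ht L hL
    · exact hbound q hq

lemma le_foldr_max (l : List ℕ) (a : ℕ) (ha : a ∈ l) : a ≤ l.foldr max 0 := by
  induction l with
  | nil => simp at ha
  | cons x xs ih =>
    rcases List.mem_cons.mp ha with rfl | ha
    · exact le_max_left _ _
    · exact le_trans (ih ha) (le_max_right _ _)

theorem stmt6 (L : List ℕ) (m p : ℕ) (hp : 1 ≤ p)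
    (hle : ∀ x ∈ L, x ≤ m) (hmem : m ∈ L) :
    (∃ parts : List (List ℕ), parts.length = p ∧ parts.flatten = L ∧
        ∀ q ∈ parts, (q.sum : ℝ) ≤ max (m : ℝ) ((L.sum : ℝ) / p) + m) ∧
    (∀ parts : List (List ℕ), parts.length = p → parts.flatten = L →
        max (m : ℝ) ((L.sum : ℝ) / p) + m ≤
          2 * (((parts.map List.sum).foldr max 0 : ℕ) : ℝ)) := by
  have hp0 : (0 : ℝ) < (p : ℝ) := by exact_mod_cast hp
  constructor
  · -- existence
    obtain ⟨p', rfl⟩ : ∃ p', p = p' + 1 := ⟨p - 1, (Nat.succ_pred_eq_of_pos hp).symm⟩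
    have hmR : (0 : ℝ) ≤ (m : ℝ) := by positivity
    have hLb : ∀ x ∈ L, (x : ℝ) ≤ (m : ℝ) := fun x hx => by exact_mod_cast hle x hx
    have hs : ((L.sum : ℝ)) ≤ ((p' : ℝ) + 1) * ((L.sum : ℝ) / (p' + 1)) := by
      rw [mul_div_cancel₀]
      positivity
    obtain ⟨parts, hlen, hflat, hbound⟩ :=
      keySplit (m : ℝ) hmR p' ((L.sum : ℝ) / (p' + 1)) L hLb hs
    refine ⟨parts, hlen, hflat, fun q hq => ?_⟩
    have h1 := hbound q hq
    have hcast : (((p' + 1 : ℕ) : ℝ)) = (p' : ℝ) + 1 := by push_cast; ring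
    rw [hcast]
    have h2 := le_max_right (m : ℝ) ((L.sum : ℝ) / ((p' : ℝ) + 1))
    linarith
  · -- lower bound
    intro parts hlen hflat
    set B := (parts.map List.sum).foldr max 0 with hB
    -- m ≤ B
    have hmB : m ≤ B := by
      rw [← hflat] at hmem
      obtain ⟨q, hq, hmq⟩ := List.mem_flatten.mp hmem
      have h1 : m ≤ q.sum := List.single_le_sum (fun _ _ => Nat.zero_le _) _ hmq
      exact le_trans h1 (le_foldr_max _ _ (List.mem_map_of_mem (f := List.sum) hq))
    -- S ≤ p * B
    have hSB : L.sum ≤ p * B := by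
      have h1 : L.sum = (parts.map List.sum).sum := by
        rw [← hflat, List.sum_flatten]
      have h2 : (parts.map List.sum).sum ≤ (parts.map List.sum).length • B :=
        List.sum_le_card_nsmul _ _ (fun x hx => le_foldr_max _ _ hx)
      simpa [h1, hlen, smul_eq_mul] using h2
    have hSBr : (L.sum : ℝ) / p ≤ (B : ℝ) := by
      rw [div_le_iff₀ hp0]
      calc (L.sum : ℝ) ≤ ((p * B : ℕ) : ℝ) := by exact_mod_cast hSB
        _ = (B : ℝ) * p := by push_cast; ring
    have hmBr : (m : ℝ) ≤ (B : ℝ) := by exact_mod_cast hmB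
    have : max (m : ℝ) ((L.sum : ℝ) / p) ≤ (B : ℝ) := max_le hmBr hSBr
    linarith
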